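/- For every n ≥ 3, there exists a decycling set of the Cartesian product C₃ □ Cₙ of cardinality n + 1; hence ∇(C₃ □ Cₙ) ≤ n + 1. -/

import Mathlib

open SimpleGraph

/-- `S` is a decycling set of `G` if the subgraph of `G` induced on the complement of `S`
is acyclic. -/
def SimpleGraph.IsDecyclingSet {V : Type*} (G : SimpleGraph V) (S : Set V) : Prop :=
  (G.induce Sᶜ).IsAcyclic

/-- The decycling number `∇(G)` of `G`: the minimum cardinality of a decycling set of `G`. -/
noncomputable def SimpleGraph.decyclingNumber {V : Type*} (G : SimpleGraph V) : ℕ :=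
  sInf {k | ∃ S : Set V, G.IsDecyclingSet S ∧ S.ncard = k}

/-- A loop walk all of whose support has `f`-value at most that of the base point
is not a cycle, provided every vertex has at most one `f`-smaller neighbor. -/
lemma no_cycle_at_max {V : Type*} {G : SimpleGraph V} {f : V → ℕ}
    (hinj : Function.Injective f)
    (h : ∀ v u₁ u₂, G.Adj v u₁ → G.Adj v u₂ → f u₁ < f v → f u₂ < f v → u₁ = u₂)
    (w : V) (c : G.Walk w w) (hmax : ∀ x ∈ c.support, f x ≤ f w) :
    ¬ c.IsCycle := by
  intro hc
  cases c with
  | nil => exact Walk.IsCycle.not_of_nil hc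
  | cons hadj q =>
    rename_i x
    have hlen3 : 3 ≤ (Walk.cons hadj q).length := hc.three_le_length
    rw [Walk.cons_isCycle_iff] at hc
    obtain ⟨hq, -⟩ := hc
    have hqlen : 2 ≤ q.length := by
      simp only [Walk.length_cons] at hlen3; omega
    have hrnil : ¬ q.reverse.Nil := by
      rw [Walk.nil_iff_length_eq, Walk.length_reverse]; omega
    set y := q.reverse.getVert 1 with hy
    have hadjy : G.Adj w y := Walk.adj_snd hrnil
    -- memberships in support
    have hxmem : x ∈ (Walk.cons hadj q).support := by
      rw [Walk.support_cons]
      exact List.mem_cons_of_mem _ q.start_mem_support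
    have hymem : y ∈ (Walk.cons hadj q).support := by
      rw [Walk.support_cons]
      refine List.mem_cons_of_mem _ ?_
      have : y ∈ q.reverse.support := by
        rw [Walk.mem_support_iff_exists_getVert]
        exact ⟨1, rfl, by rw [Walk.length_reverse]; omega⟩
      rwa [Walk.support_reverse, List.mem_reverse] at this
    have hxlt : f x < f w :=
      lt_of_le_of_ne (hmax x hxmem) (fun he => hadj.ne' (hinj he))
    have hylt : f y < f w :=
      lt_of_le_of_ne (hmax y hymem) (fun he => hadjy.ne (hinj he).symm)
    have hxy : x = y := h w x y hadj hadjy hxlt hylt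
    -- derive a contradiction: the tail of `q.reverse` would be a closed path
    have htail : q.reverse.tail.IsPath := (hq.reverse).tail
    have hcopy : (q.reverse.tail.copy hxy.symm rfl).IsPath := by
      rw [Walk.isPath_copy]; exact htail
    have hnil := Walk.isPath_iff_eq_nil.mp hcopy
    have hlen0 : q.reverse.tail.length = 0 := by
      have := congrArg Walk.length hnil
      simpa using this
    have := Walk.length_tail_add_one hrnil
    rw [Walk.length_reverse] at this
    omega

/-- If there is an injective `f : V → ℕ` such that every vertex has at most one
neighbor of smaller `f`-value, then the graph is acyclic. -/
lemma isAcyclic_of_unique_smaller_nbr {V : Type*} (G : SimpleGraph V) (f : V → ℕ)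
    (hinj : Function.Injective f)
    (h : ∀ v u₁ u₂, G.Adj v u₁ → G.Adj v u₂ → f u₁ < f v → f u₂ < f v → u₁ = u₂) :
    G.IsAcyclic := by
  classical
  intro v c hc
  have hne : c.support.toFinset.Nonempty := by
    simp [List.toFinset_nonempty_iff, c.support_ne_nil]
  obtain ⟨w, hw, hwmax⟩ := c.support.toFinset.exists_max_image f hne
  rw [List.mem_toFinset] at hw
  have hc' := hc.rotate hw
  refine no_cycle_at_max hinj h w (c.rotate w hw) ?_ hc'
  intro x hx
  rw [Walk.support_eq_cons, List.mem_cons] at hx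
  rcases hx with rfl | hx
  · exact le_rfl
  · have hx' : x ∈ c.support.tail := (Walk.support_rotate c w hw).mem_iff.mp hx
    exact hwmax x (List.mem_toFinset.mpr (List.mem_of_mem_tail hx'))

lemma fin_sub_val_eq_one {n : ℕ} (hn : 2 ≤ n) (u v : Fin n) :
    (u - v).val = 1 ↔ (u.val = v.val + 1 ∨ (v.val = n - 1 ∧ u.val = 0)) := by
  have hu := u.isLt
  have hv := v.isLt
  rw [Fin.sub_def]
  simp only
  rcases Nat.lt_or_ge (n - v.val + u.val) n with h | h
  · rw [Nat.mod_eq_of_lt h]; omega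
  · rw [Nat.mod_eq_sub_mod h, Nat.mod_eq_of_lt (by omega)]; omega

theorem decyclingNumber_C3_boxProd_Cn_le (n : ℕ) (hn : 3 ≤ n) :
    (∃ S : Set (Fin 3 × Fin n), (cycleGraph 3 □ cycleGraph n).IsDecyclingSet S ∧
        S.ncard = n + 1) ∧
      (cycleGraph 3 □ cycleGraph n).decyclingNumber ≤ n + 1 := by
  classical
  -- the decycling set
  set S : Set (Fin 3 × Fin n) :=
    {p | (p.2.val % 2 = 0 ∧ p.1.val = 2) ∨ (p.2.val % 2 = 1 ∧ p.1.val = 1) ∨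
      (p.1.val = 0 ∧ p.2.val = n - 1)} with hS
  have hmain : (∃ S : Set (Fin 3 × Fin n),
      (cycleGraph 3 □ cycleGraph n).IsDecyclingSet S ∧ S.ncard = n + 1) := by
    refine ⟨S, ?_, ?_⟩
    · -- decycling set: the induced graph on Sᶜ is acyclic
      refine isAcyclic_of_unique_smaller_nbr _
        (fun v => 3 * (v : Fin 3 × Fin n).2.val + (v : Fin 3 × Fin n).1.val) ?_ ?_
      · rintro ⟨⟨a, b⟩, hab⟩ ⟨⟨c, d⟩, hcd⟩ hfe
        simp only at hfe
        have h3a := a.isLt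
        have h3c := c.isLt
        have hbd : b.val = d.val ∧ a.val = c.val := by omega
        exact Subtype.ext (by simp [Prod.ext_iff, Fin.ext_iff, hbd.1, hbd.2])
      · rintro ⟨⟨a, b⟩, hab⟩ ⟨⟨c, d⟩, hcd⟩ ⟨⟨e, g⟩, heg⟩ h1 h2 hf1 hf2
        simp only [comap_adj, Function.Embedding.coe_subtype, boxProd_adj] at h1 h2
        simp only at hf1 hf2
        rw [Set.mem_compl_iff, hS, Set.mem_setOf_eq] at hab hcd heg
        simp only [not_or, not_and] at hab hcd heg
        have hadj3 : ∀ u v : Fin 3, (cycleGraph 3).Adj u v ↔ u.val ≠ v.val := by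
          intro u v
          rw [cycleGraph_three_eq_top, top_adj]
          exact not_congr Fin.ext_iff
        have hadjn : ∀ u v : Fin n, (cycleGraph n).Adj u v ↔
            ((u.val = v.val + 1 ∨ (v.val = n - 1 ∧ u.val = 0)) ∨
             (v.val = u.val + 1 ∨ (u.val = n - 1 ∧ v.val = 0))) := by
          intro u v
          rw [cycleGraph_adj', fin_sub_val_eq_one (by omega), fin_sub_val_eq_one (by omega)]
        simp only [hadj3, hadjn, Fin.ext_iff] at h1 h2
        have h3a := a.isLt
        have h3c := c.isLt
        have h3e := e.isLt
        have hnb := b.isLt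
        have hnd := d.isLt
        have hng := g.isLt
        have : c.val = e.val ∧ d.val = g.val := by omega
        exact Subtype.ext (by simp [Prod.ext_iff, Fin.ext_iff, this.1, this.2])
    · -- cardinality
      have hrange : S = Set.range (fun j : Fin n =>
          ((if j.val % 2 = 0 then (2 : Fin 3) else 1, j) : Fin 3 × Fin n)) ∪
          {((0 : Fin 3), (⟨n - 1, by omega⟩ : Fin n))} := by
        ext ⟨a, b⟩
        simp only [hS, Set.mem_setOf_eq, Set.mem_union, Set.mem_range,
          Set.mem_singleton_iff, Prod.mk.injEq, Prod.ext_iff]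
        have h2v : ((2 : Fin 3) : ℕ) = 2 := rfl
        have h1v : ((1 : Fin 3) : ℕ) = 1 := rfl
        have h0v : ((0 : Fin 3) : ℕ) = 0 := rfl
        constructor
        · rintro (⟨h1, h2⟩ | ⟨h1, h2⟩ | ⟨h1, h2⟩)
          · exact Or.inl ⟨b, by rw [if_pos h1]; exact ⟨Fin.ext (by omega), rfl⟩⟩
          · exact Or.inl ⟨b, by rw [if_neg (by omega)]; exact ⟨Fin.ext (by omega), rfl⟩⟩
          · exact Or.inr ⟨Fin.ext (by omega), Fin.ext (by simpa using h2)⟩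
        · rintro (⟨j, hj1, rfl⟩ | ⟨ha, hb⟩)
          · by_cases hb : (j : ℕ) % 2 = 0
            · rw [if_pos hb] at hj1
              exact Or.inl ⟨hb, by rw [← hj1]; exact h2v⟩
            · rw [if_neg hb] at hj1
              refine Or.inr (Or.inl ⟨by omega, by rw [← hj1]; exact h1v⟩)
          · exact Or.inr (Or.inr ⟨by rw [ha]; exact h0v, by rw [hb]⟩)
      rw [hrange]
      have hinj : Function.Injective (fun j : Fin n =>
          ((if j.val % 2 = 0 then (2 : Fin 3) else 1, j) : Fin 3 × Fin n)) := by
        intro j k hjk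
        simpa using congrArg Prod.snd hjk
      have hnotmem : ((0 : Fin 3), (⟨n - 1, by omega⟩ : Fin n)) ∉
          Set.range (fun j : Fin n =>
            ((if j.val % 2 = 0 then (2 : Fin 3) else 1, j) : Fin 3 × Fin n)) := by
        rintro ⟨j, hj⟩
        have := congrArg Prod.fst hj
        simp only at this
        split at this <;> simp [Fin.ext_iff] at this
      rw [Set.union_singleton, Set.ncard_insert_of_notMem hnotmem
        ((Set.finite_range _))]
      rw [← Set.image_univ, Set.ncard_image_of_injective _ hinj, Set.ncard_univ,
        Nat.card_eq_fintype_card, Fintype.card_fin]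
  refine ⟨hmain, ?_⟩
  obtain ⟨S', hS'1, hS'2⟩ := hmain
  exact Nat.sInf_le ⟨S', hS'1, hS'2⟩
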